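/- Let H ⊆ ℕⁿ be an affine semigroup minimally generated by h_1,...,h_m, and let H' ⊆ H be a homologically pure subsemigroup, i.e., H' is generated by a subset of {h_1,...,h_m} and for every h ∈ H' and every generator h_i with h − h_i ∈ H one has h_i ∈ H'. Then for every h ∈ H' and every i, the squarefree divisor complex Δ'_h of h computed with respect to H' equals the squarefree divisor complex Δ_h of h computed with respect to H. -/

import Mathlib

/-- The squarefree divisor complex `Δ_h` of `h` with respect to the affine semigroup
`H ⊆ ℕ^n` and its generators `g i`: the faces are the sets `F` of generators with
`h - ∑_{i ∈ F} g i ∈ H`. -/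
def sqDivisorComplex {α : Type*} {n : ℕ} (g : α → Fin n → ℕ)
    (H : AddSubmonoid (Fin n → ℕ)) (h : Fin n → ℕ) : Set (Finset α) :=
  {F | ∃ w ∈ H, (∑ i ∈ F, g i) + w = h}

/-- Let `H ⊆ ℕ^n` be an affine semigroup minimally generated by `g 1, …, g m`, and let
`H'` be the homologically pure subsemigroup generated by the `g i` with `i ∈ I`.
Then for every `h ∈ H'`, the squarefree divisor complex of `h` with respect to `H'`
(faces contained in `I`, with differences taken in `H'`) coincides with the squarefree
divisor complex of `h` with respect to `H`. -/
theorem stmt_5 {n m : ℕ} (g : Fin m → Fin n → ℕ)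
    (hginj : Function.Injective g)
    (hmin : ∀ i : Fin m, g i ∉ AddSubmonoid.closure (Set.range g \ {g i}))
    (I : Set (Fin m))
    (hpure : ∀ h ∈ AddSubmonoid.closure (g '' I), ∀ i : Fin m,
      (∃ w ∈ AddSubmonoid.closure (Set.range g), g i + w = h) →
        g i ∈ AddSubmonoid.closure (g '' I))
    (h : Fin n → ℕ) (hh : h ∈ AddSubmonoid.closure (g '' I)) :
    {F : Finset (Fin m) | ↑F ⊆ I} ∩ sqDivisorComplex g (AddSubmonoid.closure (g '' I)) h =
      sqDivisorComplex g (AddSubmonoid.closure (Set.range g)) h := by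
  have hle : AddSubmonoid.closure (g '' I) ≤ AddSubmonoid.closure (Set.range g) :=
    AddSubmonoid.closure_mono (Set.image_subset_range g I)
  -- key: any y ∈ H which divides h lies in H'
  have key : ∀ y ∈ AddSubmonoid.closure (Set.range g),
      (∃ x ∈ AddSubmonoid.closure (Set.range g), x + y = h) →
      y ∈ AddSubmonoid.closure (g '' I) := by
    intro y hy
    induction hy using AddSubmonoid.closure_induction with
    | mem z hz =>
      rintro ⟨x, hx, hxz⟩
      obtain ⟨i, rfl⟩ := hz
      exact hpure h hh i ⟨x, hx, by rwa [add_comm]⟩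
    | zero => exact fun _ => zero_mem _
    | add y1 y2 hy1 hy2 ih1 ih2 =>
      rintro ⟨x, hx, hxy⟩
      refine add_mem (ih1 ⟨x + y2, add_mem hx hy2, ?_⟩) (ih2 ⟨x + y1, add_mem hx hy1, ?_⟩)
      · rw [← hxy]; ring
      · rw [← hxy]; ring
  ext F
  simp only [sqDivisorComplex, Set.mem_inter_iff, Set.mem_setOf_eq]
  constructor
  · rintro ⟨hFI, w, hw, hsum⟩
    exact ⟨w, hle hw, hsum⟩
  · rintro ⟨w, hw, hsum⟩
    have hsumF : ∀ (G : Finset (Fin m)), G ⊆ F →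
        (∑ i ∈ G, g i) ∈ AddSubmonoid.closure (Set.range g) :=
      fun G _ => sum_mem fun i _ => AddSubmonoid.subset_closure (Set.mem_range_self i)
    have hdiv : ∀ i ∈ F, g i ∈ AddSubmonoid.closure (g '' I) := by
      intro i hi
      refine hpure h hh i ⟨(∑ j ∈ F.erase i, g j) + w,
        add_mem (hsumF _ (F.erase_subset i)) hw, ?_⟩
      rw [← hsum, ← add_assoc, Finset.add_sum_erase _ g hi]
    constructor
    · intro i hi
      by_contra hiI
      refine hmin i (AddSubmonoid.closure_mono ?_ (hdiv i (by simpa using hi)))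
      rintro _ ⟨j, hj, rfl⟩
      exact ⟨Set.mem_range_self j, fun hgj => hiI (hginj hgj ▸ hj)⟩
    · exact ⟨w, key w hw ⟨∑ i ∈ F, g i, hsumF F le_rfl, hsum⟩, hsum⟩
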